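/- KL divergence of product of Gaussian observations on two matrices: let M, M' be d x d real matrices and consider the distribution of a single observation (X, Y) where X is uniform on the d^2 canonical matrices e_i e_j^T and, conditionally on X, Y is Gaussian with mean <X, M> (resp. <X, M'>) and variance A^2. Then the KL divergence between the two observation distributions equals ||M - M'||_F^2 / (2 A^2 d^2). -/

import Mathlib

open MeasureTheory ProbabilityTheory
open scoped NNReal

/-- Kullback–Leibler divergence, defined as the expectation under the first measure of
the log-likelihood ratio. -/
noncomputable def klDiv {α : Type*} [MeasurableSpace α] (μ ν : Measure α) : ℝ :=
  ∫ x, llr μ ν x ∂μ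

/-- The distribution of one observation `(X, Y)`: the entry `X` is uniform over the
`d²` canonical positions and, given `X = (a, b)`, `Y ~ N(M a b, A²)`. -/
noncomputable def obsLaw (d : ℕ) [NeZero d] (M : Matrix (Fin d) (Fin d) ℝ) (A : ℝ≥0) :
    Measure ((Fin d × Fin d) × ℝ) :=
  ((PMF.uniformOfFintype (Fin d × Fin d)).toMeasure).bind
    (fun ab => (gaussianReal (M ab.1 ab.2) (A ^ 2)).map (fun y => (ab, y)))

open Real
open scoped ENNReal

lemma pdf_eq (v : ℝ≥0) :
    (fun y : ℝ => gaussianPDFReal 0 v y * y)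
      = fun y : ℝ => (Real.sqrt (2 * π * v))⁻¹ * (y * Real.exp (-(2*(v:ℝ))⁻¹ * y^2)) := by
  funext y
  simp only [gaussianPDFReal, sub_zero, one_div]
  rw [show (-y ^ 2 / (2 * (v:ℝ))) = -(2*(v:ℝ))⁻¹ * y^2 by ring]
  ring

lemma integrable_pdf_mul_id {v : ℝ≥0} (hv : v ≠ 0) :
    Integrable (fun y : ℝ => gaussianPDFReal 0 v y * y) := by
  have hvpos : (0:ℝ) < v := by positivity
  have hb : (0:ℝ) < (2*(v:ℝ))⁻¹ := by positivity
  rw [pdf_eq]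
  exact (integrable_mul_exp_neg_mul_sq hb).const_mul _

lemma integral_pdf_mul_id (v : ℝ≥0) :
    ∫ y : ℝ, gaussianPDFReal 0 v y * y = 0 := by
  have hodd : ∀ y : ℝ, gaussianPDFReal 0 v (-y) * (-y) = -(gaussianPDFReal 0 v y * y) := by
    intro y
    simp only [gaussianPDFReal, sub_zero, neg_sq, mul_neg]
  have h1 := integral_neg_eq_self (fun y : ℝ => gaussianPDFReal 0 v y * y) volume
  simp only [hodd, integral_neg] at h1
  linarith

lemma gaussianPDF_eq_nnreal (m : ℝ) (v : ℝ≥0) :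
    gaussianPDF m v = fun x => ((gaussianPDFReal m v x).toNNReal : ℝ≥0∞) := rfl

lemma integrable_affine_centered {v : ℝ≥0} (hv : v ≠ 0) (c c' : ℝ) :
    Integrable (fun y : ℝ => c * y + c') (gaussianReal 0 v) := by
  rw [gaussianReal_of_var_ne_zero _ hv, gaussianPDF_eq_nnreal,
    integrable_withDensity_iff_integrable_smul
      ((measurable_gaussianPDFReal 0 v).real_toNNReal)]
  have : (fun y : ℝ => ((gaussianPDFReal 0 v y).toNNReal : ℝ≥0) • (c * y + c'))
      = fun y : ℝ => c * (gaussianPDFReal 0 v y * y) + c' * gaussianPDFReal 0 v y := by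
    funext y
    simp only [NNReal.smul_def, Real.coe_toNNReal _ (gaussianPDFReal_nonneg 0 v y), smul_eq_mul]
    ring
  rw [this]
  exact ((integrable_pdf_mul_id hv).const_mul c).add
    ((integrable_gaussianPDFReal 0 v).const_mul c')

lemma integral_affine_centered {v : ℝ≥0} (hv : v ≠ 0) (c c' : ℝ) :
    ∫ y : ℝ, (c * y + c') ∂(gaussianReal 0 v) = c' := by
  rw [gaussianReal_of_var_ne_zero _ hv, gaussianPDF_eq_nnreal,
    integral_withDensity_eq_integral_smul
      ((measurable_gaussianPDFReal 0 v).real_toNNReal)]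
  have : (fun y : ℝ => ((gaussianPDFReal 0 v y).toNNReal : ℝ≥0) • (c * y + c'))
      = fun y : ℝ => c * (gaussianPDFReal 0 v y * y) + c' * gaussianPDFReal 0 v y := by
    funext y
    simp only [NNReal.smul_def, Real.coe_toNNReal _ (gaussianPDFReal_nonneg 0 v y), smul_eq_mul]
    ring
  rw [this, integral_add (((integrable_pdf_mul_id hv).const_mul c))
      ((integrable_gaussianPDFReal 0 v).const_mul c'),
    integral_const_mul, integral_const_mul, integral_pdf_mul_id,
    integral_gaussianPDFReal_eq_one 0 hv]
  ring

lemma gaussianReal_eq_map (m : ℝ) (v : ℝ≥0) :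
    gaussianReal m v = (gaussianReal 0 v).map (· + m) := by
  rw [gaussianReal_map_add_const, zero_add]

lemma integrable_affine_gaussian {v : ℝ≥0} (hv : v ≠ 0) (m c c' : ℝ) :
    Integrable (fun y : ℝ => c * (y - m) + c') (gaussianReal m v) := by
  rw [gaussianReal_eq_map m v]
  have he : MeasurableEmbedding (fun y : ℝ => y + m) :=
    (Homeomorph.addRight m).measurableEmbedding
  rw [he.integrable_map_iff]
  have : ((fun y : ℝ => c * (y - m) + c') ∘ fun y => y + m) = fun y : ℝ => c * y + c' := by
    funext y; simp only [Function.comp_apply, add_sub_cancel_right]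
  rw [this]
  exact integrable_affine_centered hv c c'

lemma integral_affine_gaussian {v : ℝ≥0} (hv : v ≠ 0) (m c c' : ℝ) :
    ∫ y, (c * (y - m) + c') ∂(gaussianReal m v) = c' := by
  rw [gaussianReal_eq_map m v]
  have he : MeasurableEmbedding (fun y : ℝ => y + m) :=
    (Homeomorph.addRight m).measurableEmbedding
  rw [he.integral_map]
  have : (fun y : ℝ => c * ((y + m) - m) + c') = fun y : ℝ => c * y + c' := by
    funext y; ring_nf
  simp only [this]
  exact integral_affine_centered hv c c'

lemma log_pdf_ratio {v : ℝ≥0} (hv : v ≠ 0) (m m' y : ℝ) :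
    Real.log (gaussianPDFReal m v y / gaussianPDFReal m' v y)
      = ((m - m')/v) * (y - m) + (m - m')^2/(2*(v:ℝ)) := by
  have hvpos : (0:ℝ) < v := by positivity
  have hs : (0:ℝ) < Real.sqrt (2 * π * v) := Real.sqrt_pos.mpr (by positivity)
  simp only [gaussianPDFReal, one_div]
  rw [mul_div_mul_left _ _ (by positivity : (Real.sqrt (2 * π * v))⁻¹ ≠ 0),
    ← Real.exp_sub, Real.log_exp]
  field_simp
  ring


section Aux
variable {d : ℕ} [NeZero d]

lemma measurable_pdf_fun (M : Matrix (Fin d) (Fin d) ℝ) (v : ℝ≥0) :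
    Measurable (fun p : (Fin d × Fin d) × ℝ => gaussianPDFReal (M p.1.1 p.1.2) v p.2) := by
  have hm : Measurable (fun p : (Fin d × Fin d) × ℝ => M p.1.1 p.1.2) :=
    (measurable_of_countable (fun ab : Fin d × Fin d => M ab.1 ab.2)).comp measurable_fst
  simp only [gaussianPDFReal]
  exact ((((measurable_snd.sub hm).pow_const 2).neg.div_const _).exp).const_mul _

lemma obsLaw_eq_withDensity (M M' : Matrix (Fin d) (Fin d) ℝ) {A : ℝ≥0} (hA : 0 < A) :
    obsLaw d M A = (obsLaw d M' A).withDensity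
      (fun p => ENNReal.ofReal (gaussianPDFReal (M p.1.1 p.1.2) (A ^ 2) p.2
        / gaussianPDFReal (M' p.1.1 p.1.2) (A ^ 2) p.2)) := by
  have hv : (A ^ 2 : ℝ≥0) ≠ 0 := pow_ne_zero 2 hA.ne'
  set r : (Fin d × Fin d) × ℝ → ℝ≥0∞ := fun p =>
    ENNReal.ofReal (gaussianPDFReal (M p.1.1 p.1.2) (A ^ 2) p.2
      / gaussianPDFReal (M' p.1.1 p.1.2) (A ^ 2) p.2) with hr_def
  have hr : Measurable r :=
    ((measurable_pdf_fun M _).div (measurable_pdf_fun M' _)).ennreal_ofReal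
  ext s hs
  rw [withDensity_apply _ hs, obsLaw, obsLaw,
    Measure.bind_apply hs (measurable_of_countable _).aemeasurable,
    ← lintegral_indicator hs,
    Measure.lintegral_bind (measurable_of_countable _).aemeasurable (hr.indicator hs).aemeasurable]
  congr 1
  funext ab
  rw [lintegral_map (hr.indicator hs) measurable_prodMk_left]
  have hg : Measurable fun a : ℝ => s.indicator r (ab, a) :=
    (hr.indicator hs).comp measurable_prodMk_left
  rw [gaussianReal_of_var_ne_zero (M' ab.1 ab.2) hv,
    lintegral_withDensity_eq_lintegral_mul _ (measurable_gaussianPDF _ _) hg]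
  have hpt : ∀ y : ℝ, (gaussianPDF (M' ab.1 ab.2) (A ^ 2)
        * fun y => s.indicator r (ab, y)) y
      = ((Prod.mk ab) ⁻¹' s).indicator (gaussianPDF (M ab.1 ab.2) (A ^ 2)) y := by
    intro y
    by_cases hmem : (ab, y) ∈ s
    · have hmem' : y ∈ (Prod.mk ab) ⁻¹' s := hmem
      simp only [Pi.mul_apply, Set.indicator_of_mem hmem, Set.indicator_of_mem hmem',
        hr_def, gaussianPDF]
      rw [← ENNReal.ofReal_mul (gaussianPDFReal_nonneg _ _ _)]
      congr 1
      rw [mul_comm, div_mul_cancel₀]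
      exact (gaussianPDFReal_pos _ _ _ hv).ne'
    · have hmem' : y ∉ (Prod.mk ab) ⁻¹' s := hmem
      simp [Set.indicator_of_notMem hmem, Set.indicator_of_notMem hmem']
  rw [lintegral_congr hpt, lintegral_indicator (measurable_prodMk_left hs),
    Measure.map_apply measurable_prodMk_left hs, gaussianReal_apply _ hv]


lemma obsLaw_eq_sum (M : Matrix (Fin d) (Fin d) ℝ) (A : ℝ≥0) :
    obsLaw d M A = ∑ ab : Fin d × Fin d,
      ((Fintype.card (Fin d × Fin d) : ℝ≥0∞))⁻¹
        • ((gaussianReal (M ab.1 ab.2) (A ^ 2)).map (fun y => (ab, y))) := by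
  ext s hs
  rw [obsLaw, Measure.bind_apply hs (measurable_of_countable _).aemeasurable, lintegral_fintype,
    Measure.finset_sum_apply]
  congr 1
  funext ab
  rw [PMF.toMeasure_apply_singleton _ _ (measurableSet_singleton _),
    PMF.uniformOfFintype_apply, Measure.smul_apply, smul_eq_mul, mul_comm]

instance obsLaw_isProbability (M : Matrix (Fin d) (Fin d) ℝ) (A : ℝ≥0) :
    IsProbabilityMeasure (obsLaw d M A) := by
  constructor
  rw [obsLaw, Measure.bind_apply MeasurableSet.univ (measurable_of_countable _).aemeasurable]
  have : ∀ ab : Fin d × Fin d,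
      ((gaussianReal (M ab.1 ab.2) (A ^ 2)).map (fun y => (ab, y))) Set.univ = 1 := by
    intro ab
    rw [Measure.map_apply measurable_prodMk_left MeasurableSet.univ]
    simp
  simp only [this, lintegral_one, measure_univ]

end Aux


/-- KL divergence between the Gaussian trace-regression observation distributions of
two `d × d` matrices equals `‖M - M'‖_F² / (2 A² d²)`. -/
theorem klDiv_obsLaw (d : ℕ) [NeZero d] (A : ℝ≥0) (hA : 0 < A)
    (M M' : Matrix (Fin d) (Fin d) ℝ) :
    klDiv (obsLaw d M A) (obsLaw d M' A)
      = (∑ a : Fin d, ∑ b : Fin d, (M a b - M' a b) ^ 2) / (2 * (A : ℝ) ^ 2 * d ^ 2) := by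
  have hv : (A ^ 2 : ℝ≥0) ≠ 0 := pow_ne_zero 2 hA.ne'
  have hcast : ((A ^ 2 : ℝ≥0) : ℝ) = (A : ℝ) ^ 2 := by norm_cast
  have hA2 : (0:ℝ) < (A:ℝ)^2 := by positivity
  set L : (Fin d × Fin d) × ℝ → ℝ := fun p =>
    ((M p.1.1 p.1.2 - M' p.1.1 p.1.2) / ((A:ℝ)^2)) * (p.2 - M p.1.1 p.1.2)
      + (M p.1.1 p.1.2 - M' p.1.1 p.1.2)^2 / (2 * (A:ℝ)^2) with hL_def
  have hwd := obsLaw_eq_withDensity M M' hA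
  set r : (Fin d × Fin d) × ℝ → ℝ≥0∞ := fun p =>
    ENNReal.ofReal (gaussianPDFReal (M p.1.1 p.1.2) (A ^ 2) p.2
      / gaussianPDFReal (M' p.1.1 p.1.2) (A ^ 2) p.2) with hr_def
  have hr : Measurable r :=
    ((measurable_pdf_fun M _).div (measurable_pdf_fun M' _)).ennreal_ofReal
  have hAC : obsLaw d M A ≪ obsLaw d M' A := by
    rw [hwd]; exact withDensity_absolutelyContinuous _ _
  have hrn : r =ᵐ[obsLaw d M' A] (obsLaw d M A).rnDeriv (obsLaw d M' A) :=
    Measure.eq_rnDeriv hr Measure.MutuallySingular.zero_left (by rw [zero_add]; exact hwd)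
  have hllr : llr (obsLaw d M A) (obsLaw d M' A) =ᵐ[obsLaw d M A] L := by
    filter_upwards [hAC.ae_eq hrn] with p hp
    show Real.log ((obsLaw d M A).rnDeriv (obsLaw d M' A) p).toReal = L p
    rw [← hp]
    simp only [hr_def]
    rw [ENNReal.toReal_ofReal (div_nonneg (gaussianPDFReal_nonneg _ _ _)
      (gaussianPDFReal_nonneg _ _ _))]
    rw [log_pdf_ratio hv]
    simp only [hL_def, hcast]
  rw [klDiv, integral_congr_ae hllr, obsLaw_eq_sum M A]
  set c : ℝ≥0∞ := ((Fintype.card (Fin d × Fin d) : ℝ≥0∞))⁻¹ with hc_def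
  have hc_ne_top : c ≠ ∞ := by
    rw [hc_def, ne_eq, ENNReal.inv_eq_top]
    exact_mod_cast Fintype.card_ne_zero
  set κ : (Fin d × Fin d) → Measure ((Fin d × Fin d) × ℝ) := fun ab =>
    (gaussianReal (M ab.1 ab.2) (A ^ 2)).map (fun y => (ab, y)) with hκ_def
  have hIntK : ∀ ab : Fin d × Fin d, Integrable L (κ ab) := by
    intro ab
    rw [hκ_def]
    refine (measurableEmbedding_prodMk_left ab).integrable_map_iff.mpr ?_
    exact integrable_affine_gaussian hv (M ab.1 ab.2)
      ((M ab.1 ab.2 - M' ab.1 ab.2) / ((A:ℝ)^2))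
      ((M ab.1 ab.2 - M' ab.1 ab.2)^2 / (2 * (A:ℝ)^2))
  rw [integral_finset_sum_measure (fun ab _ => (hIntK ab).smul_measure hc_ne_top)]
  have hint : ∀ ab : Fin d × Fin d, ∫ p, L p ∂(c • κ ab)
      = c.toReal * ((M ab.1 ab.2 - M' ab.1 ab.2)^2 / (2 * (A:ℝ)^2)) := by
    intro ab
    rw [integral_smul_measure, hκ_def,
      (measurableEmbedding_prodMk_left ab).integral_map, smul_eq_mul]
    congr 1
    have := integral_affine_gaussian hv (M ab.1 ab.2)
      ((M ab.1 ab.2 - M' ab.1 ab.2) / ((A:ℝ)^2))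
      ((M ab.1 ab.2 - M' ab.1 ab.2)^2 / (2 * (A:ℝ)^2))
    exact this
  simp only [hint]
  have hcr : c.toReal = ((d:ℝ) * d)⁻¹ := by
    rw [hc_def, ENNReal.toReal_inv]
    simp [Fintype.card_prod, Fintype.card_fin]
  rw [hcr]
  have hdne : (d:ℝ) ≠ 0 := by
    have := Nat.pos_of_ne_zero (NeZero.ne d)
    positivity
  have hterm : ∀ x : ℝ, ((d:ℝ) * d)⁻¹ * (x / (2 * (A:ℝ)^2)) = x / (2 * (A:ℝ)^2 * (d:ℝ)^2) := by
    intro x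
    rw [inv_mul_eq_div, div_div]
    congr 1
    ring
  simp only [Fintype.sum_prod_type, hterm, ← Finset.sum_div]
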